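/- Fix real parameters r, c₃ and c ≥ 0, and set s = r·c₃. Assume s ≤ 0, c² = c₃², c² + r² ≤ 2/3, and H₊(z) ≤ 1+sz, H₋(z) ≤ 1−sz for all z ∈ [0,1]. Then F(z) ≤ F(0) for all z ∈ [0,1], and F(0) = (1/2)(1+√(r²+c²))log₂(1+√(r²+c²)) + (1/2)(1−√(r²+c²))log₂(1−√(r²+c²)). -/

import Mathlib

/-- `H₊(z) = √(c²(1−z²)+(r+c₃z)²)`. -/
noncomputable def Hp (r c₃ c z : ℝ) : ℝ := Real.sqrt (c^2*(1 - z^2) + (r + c₃*z)^2)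

/-- `H₋(z) = √(c²(1−z²)+(r−c₃z)²)`. -/
noncomputable def Hm (r c₃ c z : ℝ) : ℝ := Real.sqrt (c^2*(1 - z^2) + (r - c₃*z)^2)

/-- The one-variable function `F(z)` from the quantum discord of X-states. -/
noncomputable def F (r s c₃ c z : ℝ) : ℝ :=
  (1/4) * (1 + s*z + Hp r c₃ c z) * Real.logb 2 ((1 + s*z + Hp r c₃ c z) / (1 + s*z)) +
  (1/4) * (1 + s*z - Hp r c₃ c z) * Real.logb 2 ((1 + s*z - Hp r c₃ c z) / (1 + s*z)) +
  (1/4) * (1 - s*z + Hm r c₃ c z) * Real.logb 2 ((1 - s*z + Hm r c₃ c z) / (1 - s*z)) +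
  (1/4) * (1 - s*z - Hm r c₃ c z) * Real.logb 2 ((1 - s*z - Hm r c₃ c z) / (1 - s*z))


/-- artanh bound: `2x ≤ log(1+x) - log(1-x)` for `0 ≤ x < 1`. -/
lemma two_mul_le_log_sub (x : ℝ) (hx0 : 0 ≤ x) (hx1 : x < 1) :
    2*x ≤ Real.log (1+x) - Real.log (1-x) := by
  have hmono : MonotoneOn (fun y : ℝ => Real.log (1+y) - Real.log (1-y) - 2*y)
      (Set.Icc 0 x) := by
    apply monotoneOn_of_hasDerivWithinAt_nonneg (f' := fun y => (1+y)⁻¹ + (1-y)⁻¹ - 2)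
      (convex_Icc 0 x)
    · apply ContinuousOn.sub
      apply ContinuousOn.sub
      · apply ContinuousOn.log
        · fun_prop
        · intro y hy
          have := hy.1; nlinarith
      · apply ContinuousOn.log
        · fun_prop
        · intro y hy
          have h1 := hy.1; have h2 := hy.2; nlinarith
      · fun_prop
    · intro y hy
      rw [interior_Icc] at hy
      have hy1 : 0 < 1+y := by have := hy.1; linarith
      have hy2 : 0 < 1-y := by have := hy.2; nlinarith
      have d1 : HasDerivAt (fun y : ℝ => Real.log (1+y)) ((1+y)⁻¹) y := by
        have i : HasDerivAt (fun y : ℝ => 1+y) 1 y := (hasDerivAt_id y).const_add 1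
        convert i.log hy1.ne' using 1; ring
      have d2 : HasDerivAt (fun y : ℝ => Real.log (1-y)) (-(1-y)⁻¹) y := by
        have i : HasDerivAt (fun y : ℝ => 1-y) (-1) y := (hasDerivAt_id y).const_sub 1
        have := (Real.hasDerivAt_log hy2.ne').comp y i
        convert i.log hy2.ne' using 1; ring
      have d3 : HasDerivAt (fun y : ℝ => 2*y) 2 y := by
        simpa using (hasDerivAt_id y).const_mul 2
      have := (d1.sub d2).sub d3
      have e : (1+y)⁻¹ - -(1-y)⁻¹ - 2 = (1+y)⁻¹ + (1-y)⁻¹ - 2 := by ring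
      rw [e] at this
      exact this.hasDerivWithinAt
    · intro y hy
      rw [interior_Icc] at hy
      have hy1 : 0 < 1+y := by have := hy.1; linarith
      have hy2 : 0 < 1-y := by have := hy.2; nlinarith
      have e : (1+y)⁻¹ + (1-y)⁻¹ = 2/((1+y)*(1-y)) := by
        field_simp; ring
      rw [e]
      have hprod : 0 < (1+y)*(1-y) := mul_pos hy1 hy2
      have h1 : (1+y)*(1-y) ≤ 1 := by nlinarith [sq_nonneg y]
      have h2 : (2:ℝ) ≤ 2/((1+y)*(1-y)) := by
        rw [le_div_iff₀ hprod]; nlinarith [sq_nonneg y]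
      linarith
  have h0 : (0:ℝ) ∈ Set.Icc 0 x := by constructor <;> simp [hx0]
  have hx : x ∈ Set.Icc 0 x := by constructor <;> simp [hx0]
  have := hmono h0 hx hx0
  simp only [add_zero, sub_zero, Real.log_one, mul_zero] at this
  linarith
/-- `G(w) = p ln p + m ln m - 2 a ln a` with `a = 1+w`, `p,m = a ± √(k+2w)`. -/
noncomputable def Gf (k w : ℝ) : ℝ :=
  (1+w+Real.sqrt (k+2*w)) * Real.log (1+w+Real.sqrt (k+2*w)) +
  (1+w-Real.sqrt (k+2*w)) * Real.log (1+w-Real.sqrt (k+2*w)) -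
  2*((1+w) * Real.log (1+w))

noncomputable def Gf' (k w : ℝ) : ℝ :=
  (1+(Real.sqrt (k+2*w))⁻¹) * (Real.log (1+w+Real.sqrt (k+2*w)) + 1) +
  (1-(Real.sqrt (k+2*w))⁻¹) * (Real.log (1+w-Real.sqrt (k+2*w)) + 1) -
  2*(Real.log (1+w) + 1)

noncomputable def Gf'' (k w : ℝ) : ℝ :=
  (-(Real.sqrt (k+2*w))⁻¹ / (Real.sqrt (k+2*w))^2) * (Real.log (1+w+Real.sqrt (k+2*w)) + 1) +
  (1+(Real.sqrt (k+2*w))⁻¹) * ((1+w+Real.sqrt (k+2*w))⁻¹ * (1+(Real.sqrt (k+2*w))⁻¹)) +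
  ((Real.sqrt (k+2*w))⁻¹ / (Real.sqrt (k+2*w))^2) * (Real.log (1+w-Real.sqrt (k+2*w)) + 1) +
  (1-(Real.sqrt (k+2*w))⁻¹) * ((1+w-Real.sqrt (k+2*w))⁻¹ * (1-(Real.sqrt (k+2*w))⁻¹)) -
  2*(1+w)⁻¹

lemma hasDerivAt_sqrtlin {k w : ℝ} (hkw : 0 < k+2*w) :
    HasDerivAt (fun x : ℝ => Real.sqrt (k+2*x)) (Real.sqrt (k+2*w))⁻¹ w := by
  have hi : HasDerivAt (fun x : ℝ => k+2*x) 2 w := by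
    simpa using ((hasDerivAt_id w).const_mul 2).const_add k
  have hs := (Real.hasDerivAt_sqrt (ne_of_gt hkw)).comp w hi
  have hS : 0 < Real.sqrt (k+2*w) := Real.sqrt_pos.2 hkw
  refine hs.congr_deriv ?_
  field_simp

lemma hasDerivAt_Gf {k w : ℝ} (hkw : 0 < k+2*w) (ha : 0 < 1+w)
    (hm : 0 < 1+w - Real.sqrt (k+2*w)) :
    HasDerivAt (Gf k) (Gf' k w) w := by
  have hS : 0 < Real.sqrt (k+2*w) := Real.sqrt_pos.2 hkw
  have hp : 0 < 1+w+Real.sqrt (k+2*w) := by linarith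
  have hsq := hasDerivAt_sqrtlin hkw
  have hP : HasDerivAt (fun x : ℝ => 1+x+Real.sqrt (k+2*x)) (1+(Real.sqrt (k+2*w))⁻¹) w :=
    ((hasDerivAt_id w).const_add 1).add hsq
  have hM : HasDerivAt (fun x : ℝ => 1+x-Real.sqrt (k+2*x)) (1-(Real.sqrt (k+2*w))⁻¹) w :=
    ((hasDerivAt_id w).const_add 1).sub hsq
  have hA : HasDerivAt (fun x : ℝ => 1+x) 1 w := (hasDerivAt_id w).const_add 1
  have hlogP : HasDerivAt (fun x : ℝ => Real.log (1+x+Real.sqrt (k+2*x)))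
      ((1+w+Real.sqrt (k+2*w))⁻¹ * (1+(Real.sqrt (k+2*w))⁻¹)) w :=
    by convert hP.log hp.ne' using 1; ring
  have hlogM : HasDerivAt (fun x : ℝ => Real.log (1+x-Real.sqrt (k+2*x)))
      ((1+w-Real.sqrt (k+2*w))⁻¹ * (1-(Real.sqrt (k+2*w))⁻¹)) w :=
    by convert hM.log hm.ne' using 1; ring
  have hlogA : HasDerivAt (fun x : ℝ => Real.log (1+x)) ((1+w)⁻¹ * 1) w :=
    (Real.hasDerivAt_log ha.ne').comp w hA
  have total := ((hP.mul hlogP).add (hM.mul hlogM)).sub ((hA.mul hlogA).const_mul 2)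
  refine total.congr_deriv ?_
  unfold Gf'
  field_simp

lemma hasDerivAt_Gf' {k w : ℝ} (hkw : 0 < k+2*w) (ha : 0 < 1+w)
    (hm : 0 < 1+w - Real.sqrt (k+2*w)) :
    HasDerivAt (Gf' k) (Gf'' k w) w := by
  have hS : 0 < Real.sqrt (k+2*w) := Real.sqrt_pos.2 hkw
  have hp : 0 < 1+w+Real.sqrt (k+2*w) := by linarith
  have hsq := hasDerivAt_sqrtlin hkw
  have hinv : HasDerivAt (fun x : ℝ => (Real.sqrt (k+2*x))⁻¹)
      (-(Real.sqrt (k+2*w))⁻¹ / (Real.sqrt (k+2*w))^2) w := hsq.inv hS.ne'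
  have hP : HasDerivAt (fun x : ℝ => 1+x+Real.sqrt (k+2*x)) (1+(Real.sqrt (k+2*w))⁻¹) w :=
    ((hasDerivAt_id w).const_add 1).add hsq
  have hM : HasDerivAt (fun x : ℝ => 1+x-Real.sqrt (k+2*x)) (1-(Real.sqrt (k+2*w))⁻¹) w :=
    ((hasDerivAt_id w).const_add 1).sub hsq
  have hA : HasDerivAt (fun x : ℝ => 1+x) 1 w := (hasDerivAt_id w).const_add 1
  have hlogP : HasDerivAt (fun x : ℝ => Real.log (1+x+Real.sqrt (k+2*x)))
      ((1+w+Real.sqrt (k+2*w))⁻¹ * (1+(Real.sqrt (k+2*w))⁻¹)) w :=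
    by convert hP.log hp.ne' using 1; ring
  have hlogM : HasDerivAt (fun x : ℝ => Real.log (1+x-Real.sqrt (k+2*x)))
      ((1+w-Real.sqrt (k+2*w))⁻¹ * (1-(Real.sqrt (k+2*w))⁻¹)) w :=
    by convert hM.log hm.ne' using 1; ring
  have hlogA : HasDerivAt (fun x : ℝ => Real.log (1+x)) ((1+w)⁻¹ * 1) w :=
    (Real.hasDerivAt_log ha.ne').comp w hA
  have t1 := (hinv.const_add 1).mul (hlogP.add_const 1)
  have t2 := (hinv.const_sub 1).mul (hlogM.add_const 1)
  have t3 := (hlogA.add_const 1).const_mul 2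
  have total := (t1.add t2).sub t3
  refine total.congr_deriv ?_
  unfold Gf''
  ring

lemma Gpp_nonpos {k w : ℝ} (hk0 : 0 ≤ k) (hk : k ≤ 2/3) (hw1 : -(1/3) ≤ w) (hw2 : w ≤ 1/3)
    (hkw : 0 < k+2*w) : Gf'' k w ≤ 0 := by
  set S := Real.sqrt (k+2*w) with hSdef
  have hS : 0 < S := Real.sqrt_pos.2 hkw
  have hS2 : S^2 = k+2*w := Real.sq_sqrt hkw.le
  have ha : 0 < 1+w := by linarith
  have hQ : 0 < (1+w)^2 - S^2 := by rw [hS2]; nlinarith [sq_nonneg w]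
  have hSa : S < 1+w := by nlinarith
  have hm : 0 < 1+w-S := by linarith
  have hp : 0 < 1+w+S := by linarith
  have hx0 : 0 ≤ S/(1+w) := by positivity
  have hx1 : S/(1+w) < 1 := (div_lt_one ha).2 hSa
  have hL := two_mul_le_log_sub _ hx0 hx1
  rw [show (1:ℝ)+S/(1+w) = (1+w+S)/(1+w) by field_simp,
      show (1:ℝ)-S/(1+w) = (1+w-S)/(1+w) by field_simp,
      Real.log_div hp.ne' ha.ne', Real.log_div hm.ne' ha.ne'] at hL
  -- hL : 2*(S/(1+w)) ≤ (log p - log a) - (log m - log a)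
  have hL' : 2*(S/(1+w)) ≤ Real.log (1+w+S) - Real.log (1+w-S) := by linarith
  have key : Gf'' k w = -(S⁻¹/S^2) * (Real.log (1+w+S) - Real.log (1+w-S)) +
      ((1+S⁻¹) * ((1+w+S)⁻¹*(1+S⁻¹)) + (1-S⁻¹)*((1+w-S)⁻¹*(1-S⁻¹)) - 2*(1+w)⁻¹) := by
    unfold Gf''
    rw [← hSdef]
    ring
  rw [key]
  have hcoef : 0 < S⁻¹/S^2 := by positivity
  have step1 : -(S⁻¹/S^2) * (Real.log (1+w+S) - Real.log (1+w-S))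
      ≤ -(S⁻¹/S^2) * (2*(S/(1+w))) := by
    have := mul_le_mul_of_nonneg_left hL' hcoef.le
    linarith
  have step2 : -(S⁻¹/S^2) * (2*(S/(1+w))) +
      ((1+S⁻¹) * ((1+w+S)⁻¹*(1+S⁻¹)) + (1-S⁻¹)*((1+w-S)⁻¹*(1-S⁻¹)) - 2*(1+w)⁻¹)
      = 2*(S^2-2*w-1)/((1+w)*((1+w)^2-S^2)) := by
    field_simp
    ring
  have hnum : 2*(S^2-2*w-1) ≤ 0 := by rw [hS2]; linarith
  have hden : 0 ≤ (1+w)*((1+w)^2-S^2) := (mul_pos ha hQ).le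
  have := div_nonpos_of_nonpos_of_nonneg hnum hden
  linarith [step1, step2.symm ▸ this]

lemma Gf_concave_ineq (k t : ℝ) (hk0 : 0 ≤ k) (hk : k ≤ 2/3) (ht3 : -(1/3) ≤ t)
    (ht0 : t ≤ 0) (hkt : 0 ≤ k+2*t) : Gf k t + Gf k (-t) ≤ 2 * Gf k 0 := by
  rcases eq_or_lt_of_le ht0 with h|h
  · rw [h, neg_zero]; ring_nf; rfl
  have hconc : ConcaveOn ℝ (Set.Icc t (-t)) (Gf k) := by
    apply concaveOn_of_hasDerivWithinAt2_nonpos (f' := Gf' k) (f'' := Gf'' k)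
      (convex_Icc _ _)
    · -- continuity
      have hGf : Gf k = fun w => (1+w+Real.sqrt (k+2*w)) * Real.log (1+w+Real.sqrt (k+2*w)) +
          (1+w-Real.sqrt (k+2*w)) * Real.log (1+w-Real.sqrt (k+2*w)) -
          2*((1+w) * Real.log (1+w)) := rfl
      rw [hGf]
      have cP : Continuous (fun w : ℝ => 1+w+Real.sqrt (k+2*w)) := by fun_prop
      have cM : Continuous (fun w : ℝ => 1+w-Real.sqrt (k+2*w)) := by fun_prop
      have cA : Continuous (fun w : ℝ => 1+w) := by fun_prop
      have bounds : ∀ x ∈ Set.Icc t (-t), 0 < 1+x-Real.sqrt (k+2*x) ∧ 0 < 1+x := by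
        intro x hx
        obtain ⟨hx1, hx2⟩ := hx
        have ha : 0 < 1+x := by linarith
        have hkx : 0 ≤ k+2*x := by linarith
        have hlt : Real.sqrt (k+2*x) < 1+x := by
          rw [Real.sqrt_lt' ha]; nlinarith [sq_nonneg x]
        exact ⟨by linarith, ha⟩
      apply ContinuousOn.sub
      apply ContinuousOn.add
      · exact cP.continuousOn.mul (cP.continuousOn.log (fun x hx => by
          have hb := bounds x hx
          have : 0 ≤ Real.sqrt (k+2*x) := Real.sqrt_nonneg _
          nlinarith [hb.1, hb.2]))
      · exact cM.continuousOn.mul (cM.continuousOn.log (fun x hx => (bounds x hx).1.ne'))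
      · exact ((cA.continuousOn.mul (cA.continuousOn.log
          (fun x hx => (bounds x hx).2.ne'))).const_smul (2:ℝ)).congr (by
            intro x hx; simp [smul_eq_mul])
    · intro x hx
      rw [interior_Icc] at hx
      have ha : 0 < 1+x := by have := hx.1; linarith
      have hkx : 0 < k+2*x := by have := hx.1; linarith
      have hlt : Real.sqrt (k+2*x) < 1+x := by
        rw [Real.sqrt_lt' ha]
        have := hx.2; nlinarith [sq_nonneg x]
      exact (hasDerivAt_Gf hkx ha (by linarith)).hasDerivWithinAt
    · intro x hx
      rw [interior_Icc] at hx
      have ha : 0 < 1+x := by have := hx.1; linarith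
      have hkx : 0 < k+2*x := by have := hx.1; linarith
      have hlt : Real.sqrt (k+2*x) < 1+x := by
        rw [Real.sqrt_lt' ha]
        have := hx.2; nlinarith [sq_nonneg x]
      exact (hasDerivAt_Gf' hkx ha (by linarith)).hasDerivWithinAt
    · intro x hx
      rw [interior_Icc] at hx
      have hkx : 0 < k+2*x := by have := hx.1; linarith
      exact Gpp_nonpos hk0 hk (by have := hx.1; linarith) (by have := hx.2; linarith) hkx
  have hmem1 : t ∈ Set.Icc t (-t) := ⟨le_refl t, by linarith⟩
  have hmem2 : -t ∈ Set.Icc t (-t) := ⟨by linarith, le_refl (-t)⟩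
  have h2 := hconc.2 hmem1 hmem2 (by norm_num : (0:ℝ) ≤ 1/2) (by norm_num : (0:ℝ) ≤ 1/2)
    (by norm_num : (1:ℝ)/2 + 1/2 = 1)
  simp only [smul_eq_mul] at h2
  rw [show (1:ℝ)/2*t + 1/2*(-t) = 0 by ring] at h2
  linarith

lemma term_eq (X a : ℝ) (hX : 0 < X) (ha : 0 < a) :
    (1/4)*X*Real.logb 2 (X/a) = (X*Real.log X - X*Real.log a)/(4*Real.log 2) := by
  have h2 : Real.log 2 ≠ 0 := (Real.log_pos one_lt_two).ne'
  rw [Real.logb, Real.log_div hX.ne' ha.ne']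
  field_simp

lemma Gf_neg_form (k t : ℝ) : Gf k (-t) =
    (1-t+Real.sqrt (k-2*t)) * Real.log (1-t+Real.sqrt (k-2*t)) +
    (1-t-Real.sqrt (k-2*t)) * Real.log (1-t-Real.sqrt (k-2*t)) -
    2*((1-t) * Real.log (1-t)) := by
  unfold Gf
  rw [show k+2*(-t) = k-2*t by ring, show (1:ℝ)+(-t) = 1-t by ring]

theorem F_max_at_zero_case_d (r c₃ c : ℝ) (hc : 0 ≤ c)
    (hs0 : r * c₃ ≤ 0) (hcc : c^2 = c₃^2) (hbound : c^2 + r^2 ≤ 2/3)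
    (hHp : ∀ z ∈ Set.Icc (0:ℝ) 1, Hp r c₃ c z ≤ 1 + (r * c₃)*z)
    (hHm : ∀ z ∈ Set.Icc (0:ℝ) 1, Hm r c₃ c z ≤ 1 - (r * c₃)*z) :
    (∀ z ∈ Set.Icc (0:ℝ) 1, F r (r * c₃) c₃ c z ≤ F r (r * c₃) c₃ c 0) ∧
    F r (r * c₃) c₃ c 0 =
      (1/2) * (1 + Real.sqrt (r^2 + c^2)) * Real.logb 2 (1 + Real.sqrt (r^2 + c^2)) +
      (1/2) * (1 - Real.sqrt (r^2 + c^2)) * Real.logb 2 (1 - Real.sqrt (r^2 + c^2)) := by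
  have hk23 : r^2+c^2 ≤ 2/3 := by linarith
  have hk0 : (0:ℝ) ≤ r^2+c^2 := by positivity
  have hL2 : (0:ℝ) < Real.log 2 := Real.log_pos one_lt_two
  -- key bridging identity
  have key : ∀ z ∈ Set.Icc (0:ℝ) 1, F r (r*c₃) c₃ c z =
      (Gf (r^2+c^2) (r*c₃*z) + Gf (r^2+c^2) (-(r*c₃*z))) / (4*Real.log 2) := by
    intro z hz
    obtain ⟨hz0, hz1⟩ := hz
    have e1 : c^2*(1-z^2)+(r+c₃*z)^2 = r^2+c^2 + 2*(r*c₃*z) := by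
      linear_combination (-(z^2))*hcc
    have e2 : c^2*(1-z^2)+(r-c₃*z)^2 = r^2+c^2 - 2*(r*c₃*z) := by
      linear_combination (-(z^2))*hcc
    have h1z : (0:ℝ) ≤ 1 - z^2 := by nlinarith
    have hnn1 : (0:ℝ) ≤ c^2*(1-z^2)+(r+c₃*z)^2 :=
      add_nonneg (mul_nonneg (sq_nonneg c) h1z) (sq_nonneg _)
    have hnn2 : (0:ℝ) ≤ c^2*(1-z^2)+(r-c₃*z)^2 :=
      add_nonneg (mul_nonneg (sq_nonneg c) h1z) (sq_nonneg _)
    have hkp : 0 ≤ r^2+c^2 + 2*(r*c₃*z) := e1 ▸ hnn1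
    have hkm : 0 ≤ r^2+c^2 - 2*(r*c₃*z) := e2 ▸ hnn2
    have ht0 : r*c₃*z ≤ 0 := mul_nonpos_of_nonpos_of_nonneg hs0 hz0
    have hts : -(1/3) ≤ r*c₃*z := by nlinarith [sq_nonneg (r+c₃), mul_nonneg (neg_nonneg.2 hs0) (sub_nonneg.2 hz1)]
    have hap : (0:ℝ) < 1 + r*c₃*z := by linarith
    have ham : (0:ℝ) < 1 - r*c₃*z := by linarith
    have hmp : Real.sqrt (r^2+c^2 + 2*(r*c₃*z)) < 1 + r*c₃*z := by
      rw [Real.sqrt_lt' hap]; nlinarith [sq_nonneg (r*c₃*z)]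
    have hmm : Real.sqrt (r^2+c^2 - 2*(r*c₃*z)) < 1 - r*c₃*z := by
      rw [Real.sqrt_lt' ham]; nlinarith [sq_nonneg (r*c₃*z)]
    have hSp : 0 ≤ Real.sqrt (r^2+c^2 + 2*(r*c₃*z)) := Real.sqrt_nonneg _
    have hSm : 0 ≤ Real.sqrt (r^2+c^2 - 2*(r*c₃*z)) := Real.sqrt_nonneg _
    unfold F Hp Hm
    rw [e1, e2, Gf_neg_form]
    unfold Gf
    rw [term_eq (1 + r*c₃*z + Real.sqrt (r^2+c^2 + 2*(r*c₃*z))) (1 + r*c₃*z) (by linarith) hap,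
        term_eq (1 + r*c₃*z - Real.sqrt (r^2+c^2 + 2*(r*c₃*z))) (1 + r*c₃*z) (by linarith) hap,
        term_eq (1 - r*c₃*z + Real.sqrt (r^2+c^2 - 2*(r*c₃*z))) (1 - r*c₃*z) (by linarith) ham,
        term_eq (1 - r*c₃*z - Real.sqrt (r^2+c^2 - 2*(r*c₃*z))) (1 - r*c₃*z) (by linarith) ham]
    ring
  constructor
  · intro z hz
    obtain ⟨hz0, hz1⟩ := hz
    have hF0 := key 0 ⟨le_refl 0, by norm_num⟩
    have hFz := key z ⟨hz0, hz1⟩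
    rw [hFz, hF0, mul_zero, neg_zero]
    have ht0 : r*c₃*z ≤ 0 := mul_nonpos_of_nonpos_of_nonneg hs0 hz0
    have hts : -(1/3) ≤ r*c₃*z := by nlinarith [sq_nonneg (r+c₃), mul_nonneg (neg_nonneg.2 hs0) (sub_nonneg.2 hz1)]
    have e1 : c^2*(1-z^2)+(r+c₃*z)^2 = r^2+c^2 + 2*(r*c₃*z) := by
      linear_combination (-(z^2))*hcc
    have h1z : (0:ℝ) ≤ 1 - z^2 := by nlinarith
    have hnn1 : (0:ℝ) ≤ c^2*(1-z^2)+(r+c₃*z)^2 :=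
      add_nonneg (mul_nonneg (sq_nonneg c) h1z) (sq_nonneg _)
    have hkt : 0 ≤ r^2+c^2 + 2*(r*c₃*z) := e1 ▸ hnn1
    have hineq := Gf_concave_ineq (r^2+c^2) (r*c₃*z) hk0 hk23 hts ht0 hkt
    have h4 : (0:ℝ) < 4*Real.log 2 := by linarith
    exact (div_le_div_iff_of_pos_right h4).2 (by linarith [hineq])
  · have e1 : Hp r c₃ c 0 = Real.sqrt (r^2+c^2) := by
      unfold Hp; congr 1; ring
    have e2 : Hm r c₃ c 0 = Real.sqrt (r^2+c^2) := by
      unfold Hm; congr 1; ring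
    unfold F
    rw [e1, e2, mul_zero]
    norm_num
    ring
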